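/- arXiv:2205.03253 — 2 statements merged into one kernel-verified Lean document; each statement's English description precedes it below -/
import Mathlib

section
/- Let K be a finite simplicial complex, f an injective filtration function on K, and σ₁, …, σ_k distinct n-dimensional simplices of K with f(σ₁) < f(σ₂) < … < f(σ_k) < f(σ₁) + 2ε for some ε > 0. Then for every permutation π of {1, …, k} there exists an injective filtration function g on K such that ‖f − g‖_∞ ≤ ε and g(σ_{π(1)}) < g(σ_{π(2)}) < … < g(σ_{π(k)}). -/
open scoped BigOperators

/-- A finite simplicial complex on vertex type `V`: a finite family of nonempty
finite vertex sets closed under passing to nonempty subsets. -/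
structure SComplex (V : Type*) where
  faces : Finset (Finset V)
  nonempty_of_mem : ∀ s ∈ faces, s.Nonempty
  down_closed : ∀ s ∈ faces, ∀ t ⊆ s, t.Nonempty → t ∈ faces

variable {V : Type*} [LinearOrder V]

/-- `f` is an injective filtration function on `K`: face-monotone and injective on faces. -/
def IsFiltrationFn (K : SComplex V) (f : Finset V → ℝ) : Prop :=
  (∀ s ∈ K.faces, ∀ t ∈ K.faces, s ⊆ t → f s ≤ f t) ∧
  (∀ s ∈ K.faces, ∀ t ∈ K.faces, f s = f t → s = t)

/-- The sup-distance between `f` and `g` over the faces of `K` is at most `ε`. -/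
def DistLE (K : SComplex V) (f g : Finset V → ℝ) (ε : ℝ) : Prop :=
  ∀ s ∈ K.faces, |f s - g s| ≤ ε

/-- The sublevel subcomplex `K^f_r = f⁻¹((-∞, r])`. -/
noncomputable def sublevel (K : SComplex V) (f : Finset V → ℝ) (r : ℝ) : Finset (Finset V) :=
  K.faces.filter (fun s => f s ≤ r)

variable (𝔽 : Type*) [Field 𝔽]

/-- The simplicial boundary operator on chains (finitely supported functions on
simplices), with signs determined by the linear order on vertices. -/
noncomputable def bdry : (Finset V →₀ 𝔽) →ₗ[𝔽] (Finset V →₀ 𝔽) :=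
  Finsupp.lsum 𝔽 (fun s => ∑ x ∈ s,
    ((-1 : 𝔽) ^ (s.filter (fun y => y < x)).card) • Finsupp.lsingle (s.erase x))

/-- The submodule of `n`-chains supported on simplices of `L` (of cardinality `n+1`). -/
def chainsIn (L : Finset (Finset V)) (n : ℕ) : Submodule 𝔽 (Finset V →₀ 𝔽) where
  carrier := {c | ∀ s ∈ c.support, s ∈ L ∧ s.card = n + 1}
  add_mem' := by
    intro c d hc hd s hs
    rcases Finset.mem_union.mp (Finsupp.support_add hs) with h | h
    · exact hc s h
    · exact hd s h
  zero_mem' := by intro s hs; simp at hs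
  smul_mem' := by
    intro a c hc s hs
    exact hc s (Finsupp.support_smul hs)

/-- `n`-cycles supported in `L`. -/
noncomputable def cyclesIn (L : Finset (Finset V)) (n : ℕ) : Submodule 𝔽 (Finset V →₀ 𝔽) :=
  chainsIn 𝔽 L n ⊓ LinearMap.ker (bdry 𝔽)

/-- `n`-boundaries of `(n+1)`-chains supported in `L`. -/
noncomputable def boundariesIn (L : Finset (Finset V)) (n : ℕ) : Submodule 𝔽 (Finset V →₀ 𝔽) :=
  (chainsIn 𝔽 L (n + 1)).map (bdry 𝔽)

/-- `α` is an `n`-cycle in the subcomplex `L`. -/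
def IsCycleIn (L : Finset (Finset V)) (n : ℕ) (α : Finset V →₀ 𝔽) : Prop :=
  α ∈ cyclesIn 𝔽 L n

/-- The class of `α` is trivial in `H_n(L)`. -/
def TrivialIn (L : Finset (Finset V)) (n : ℕ) (α : Finset V →₀ 𝔽) : Prop :=
  α ∈ boundariesIn 𝔽 L n

/-- `α` and `β` are homologous in `L`. -/
def HomologousIn (L : Finset (Finset V)) (n : ℕ) (α β : Finset V →₀ 𝔽) : Prop :=
  α - β ∈ boundariesIn 𝔽 L n

/-- The homology class `[α] ∈ H_n(K^f_a)` is born at `a`: it is a nontrivial cycle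
at level `a` and does not come from any strictly earlier level. -/
def BornAt (K : SComplex V) (f : Finset V → ℝ) (n : ℕ) (α : Finset V →₀ 𝔽) (a : ℝ) : Prop :=
  IsCycleIn 𝔽 (sublevel K f a) n α ∧ ¬ TrivialIn 𝔽 (sublevel K f a) n α ∧
  ∀ q < a, ¬ ∃ β, IsCycleIn 𝔽 (sublevel K f q) n β ∧ HomologousIn 𝔽 (sublevel K f a) n α β

/-- The class `[α]` terminates at level `b` in the filtration `K^f`. -/
def TerminatesAt (K : SComplex V) (f : Finset V → ℝ) (n : ℕ) (α : Finset V →₀ 𝔽) (b : ℝ) : Prop :=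
  TrivialIn 𝔽 (sublevel K f b) n α ∧ ∀ q < b, ¬ TrivialIn 𝔽 (sublevel K f q) n α

/-- `Δ` is the terminal simplex of `[α]` in the filtration `K^f`: the simplex added
at the level where `[α]` terminates. -/
def TerminalSimplex (K : SComplex V) (f : Finset V → ℝ) (n : ℕ) (α : Finset V →₀ 𝔽)
    (Δ : Finset V) : Prop :=
  Δ ∈ K.faces ∧ TerminatesAt 𝔽 K f n α (f Δ)

/-- `Σ_ε`: the set of terminal simplices of `[α]` over all injective filtration
functions within sup-distance `ε` of `f`. -/
def TermSet (K : SComplex V) (f : Finset V → ℝ) (n : ℕ) (α : Finset V →₀ 𝔽) (ε : ℝ) :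
    Set (Finset V) :=
  {Δ | ∃ g, IsFiltrationFn K g ∧ DistLE K f g ε ∧ TerminalSimplex 𝔽 K g n α Δ}

/-- `τ` gives birth to a class in `H_n(K^f)`. -/
def IsBirthSimplex (K : SComplex V) (f : Finset V → ℝ) (n : ℕ) (τ : Finset V) : Prop :=
  τ ∈ K.faces ∧ ∃ β : Finset V →₀ 𝔽, BornAt 𝔽 K f n β (f τ)

/-- `τ` terminates a class in `H_n(K^f)`. -/
def IsTerminalSimplexOf (K : SComplex V) (f : Finset V → ℝ) (n : ℕ) (τ : Finset V) : Prop :=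
  τ ∈ K.faces ∧ ∃ (β : Finset V →₀ 𝔽) (a : ℝ),
    BornAt 𝔽 K f n β a ∧ TerminatesAt 𝔽 K f n β (f τ)

/-- The linear order on the faces of `K` induced by `g`. -/
def inducedRel (K : SComplex V) (g : Finset V → ℝ) :
    {s // s ∈ K.faces} → {s // s ∈ K.faces} → Prop :=
  fun s t => g s.1 < g t.1

/-- `Π_ε`: the set of orders on the faces of `K` induced by injective filtration
functions within sup-distance `ε` of `f`. -/
def OrderSet (K : SComplex V) (f : Finset V → ℝ) (ε : ℝ) :
    Set ({s // s ∈ K.faces} → {s // s ∈ K.faces} → Prop) :=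
  {r | ∃ g, IsFiltrationFn K g ∧ DistLE K f g ε ∧ r = inducedRel K g}

/-- `f` is generic: equal absolute differences of `f`-values occur only for the
same unordered pair of faces. -/
def Generic (K : SComplex V) (f : Finset V → ℝ) : Prop :=
  ∀ s ∈ K.faces, ∀ t ∈ K.faces, ∀ s' ∈ K.faces, ∀ t' ∈ K.faces,
    s ≠ t → s' ≠ t' → |f s - f t| = |f s' - f t'| →
    (s = s' ∧ t = t') ∨ (s = t' ∧ t = s')

/-- The rank of the map `H_n(K^f_p) → H_n(K^f_q)`, realized as the dimension of
the image of the cycles at level `p` in the quotient by boundaries at level `q`. -/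
noncomputable def persRank (K : SComplex V) (f : Finset V → ℝ) (n : ℕ) (p q : ℝ) : ℕ :=
  Module.finrank 𝔽
    ↥(Submodule.map (boundariesIn 𝔽 (sublevel K f q) n).mkQ (cyclesIn 𝔽 (sublevel K f p) n))

/-- `[a, b)` is a bar of the `n`-th persistence module of `K^f`: the standard
inclusion–exclusion of ranks equals `1` for all sufficiently small offsets. -/
def IsBar (K : SComplex V) (f : Finset V → ℝ) (n : ℕ) (a b : ℝ) : Prop :=
  a < b ∧ ∃ δ > 0, ∀ ε : ℝ, 0 < ε → ε < δ →
    persRank 𝔽 K f n a (b - ε) + persRank 𝔽 K f n (a - ε) b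
      = persRank 𝔽 K f n a b + persRank 𝔽 K f n (a - ε) (b - ε) + 1

set_option maxHeartbeats 4000000 in
/-- Corollary `switchmany`: any permutation of `n`-simplices
whose `f`-values lie within a window of length `< 2ε` can be realized by an
`ε`-perturbation. -/
theorem stmt1 {V : Type*} [LinearOrder V] (K : SComplex V) (f : Finset V → ℝ)
    (hf : IsFiltrationFn K f) (n : ℕ) (k : ℕ) (hk : 0 < k) (σ : Fin k → Finset V)
    (hmem : ∀ i, σ i ∈ K.faces) (hinj : Function.Injective σ)
    (hdim : ∀ i, (σ i).card = n + 1)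
    (ε : ℝ) (hε : 0 < ε)
    (hmono : ∀ i j : Fin k, i < j → f (σ i) < f (σ j))
    (hspan : ∀ i : Fin k, f (σ i) < f (σ ⟨0, hk⟩) + 2 * ε)
    (π : Equiv.Perm (Fin k)) :
    ∃ g : Finset V → ℝ, IsFiltrationFn K g ∧ DistLE K f g ε ∧
      ∀ i j : Fin k, i < j → g (σ (π i)) < g (σ (π j)) := by
    classical
  haveI : Nonempty (Fin k) := ⟨⟨0, hk⟩⟩
  obtain ⟨hmono_f, hinj_f⟩ := hf
  set z : Fin k := ⟨0, hk⟩ with hz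
  set L : ℝ := f (σ z) with hLdef
  set M : ℝ := Finset.univ.sup' Finset.univ_nonempty (fun i => f (σ i)) with hMdef
  have hLle : ∀ i, L ≤ f (σ i) := by
    intro i
    rcases eq_or_lt_of_le (show z ≤ i from Fin.le_def.mpr (Nat.zero_le _)) with h | h
    · rw [hLdef, h]
    · exact (hmono z i h).le
  have hleM : ∀ i, f (σ i) ≤ M := by
    intro i
    rw [hMdef]
    exact Finset.le_sup' (fun i => f (σ i)) (Finset.mem_univ i)
  have hLM : L ≤ M := (hLle z).trans (hleM z)
  have hMlt : M < L + 2 * ε := by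
    rw [hMdef]
    exact (Finset.sup'_lt_iff Finset.univ_nonempty).mpr fun i _ => hspan i
  set A : ℝ := M - ε with hAdef
  set B : ℝ := L + ε with hBdef
  have hMA : M - A = ε := by rw [hAdef]; ring
  have hBL : B - L = ε := by rw [hBdef]; ring
  have hAB : A < B := by rw [hAdef, hBdef]; linarith
  -- the bad set of parameters to avoid
  set Bad : Finset ℝ :=
    ((K.faces ×ˢ K.faces).image fun p => (f p.1 - A) / (f p.2 - A)) ∪
    ((K.faces ×ˢ K.faces).image fun p => (B - f p.1) / (B - f p.2)) ∪
    ((K.faces ×ˢ (Finset.univ : Finset (Fin k))).image fun p =>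
      (f p.1 - A) / (ε + 1 + ((p.2 : ℕ) : ℝ))) with hBaddef
  set c0 : ℝ := min 1 ((B - A) / (2 * ε + k + 1)) with hc0def
  have hc0 : 0 < c0 :=
    lt_min one_pos (div_pos (by linarith) (by positivity))
  obtain ⟨c, hcIoo, hcBad⟩ :
      ∃ c, c ∈ Set.Ioo (0 : ℝ) c0 ∧ c ∉ (Bad : Set ℝ) := by
    have : ((Set.Ioo (0 : ℝ) c0) \ (Bad : Set ℝ)).Nonempty :=
      ((Set.Ioo_infinite hc0).diff (Bad.finite_toSet)).nonempty
    obtain ⟨c, hc⟩ := this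
    exact ⟨c, hc.1, hc.2⟩
  have hc_pos : 0 < c := hcIoo.1
  have hc_lt1 : c < 1 := lt_of_lt_of_le hcIoo.2 (min_le_left _ _)
  have hc_bound : c * (2 * ε + k + 1) < B - A := by
    have h1 : c < (B - A) / (2 * ε + k + 1) := lt_of_lt_of_le hcIoo.2 (min_le_right _ _)
    exact (lt_div_iff₀ (by positivity)).mp h1
  have hck_nonneg : 0 ≤ c * (k : ℝ) := mul_nonneg hc_pos.le (Nat.cast_nonneg k)
  have hgap : A + c * ε + c * k < B - c * ε := by nlinarith
  have hcε : 0 < c * ε := mul_pos hc_pos hε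
  -- position of a simplex in the permuted order
  set pos : Finset V → ℝ :=
    fun s => ∑ i : Fin k, if σ (π i) = s then ((i : ℕ) : ℝ) + 1 else 0 with hposdef
  have hpos : ∀ j, pos (σ j) = ((π.symm j : ℕ) : ℝ) + 1 := by
    intro j
    have h1 : ∀ i : Fin k, (σ (π i) = σ j) = (i = π.symm j) := by
      intro i
      simp only [eq_iff_iff, hinj.eq_iff]
      constructor
      · intro h; rw [← h]; simp
      · intro h; rw [h]; simp
    rw [hposdef]
    simp only [h1]
    rw [Finset.sum_ite_eq' Finset.univ (π.symm j) (fun i : Fin k => ((i : ℕ) : ℝ) + 1)]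
    simp
  -- the perturbed function
  set g : Finset V → ℝ := fun s =>
    if ∃ j, σ j = s then A + c * ε + c * pos s
    else if s.card ≤ n ∧ A < f s ∧ f s < M then A + c * (f s - A)
    else if n + 2 ≤ s.card ∧ L < f s ∧ f s < B then B - c * (B - f s)
    else f s with hgdef
  have hgS : ∀ j, g (σ j) = A + c * ε + c * (((π.symm j : ℕ) : ℝ) + 1) := by
    intro j
    rw [hgdef]
    simp only
    rw [if_pos ⟨j, rfl⟩, hpos]
  have hS_lb : ∀ j, A + c * ε + c ≤ g (σ j) := by
    intro j
    rw [hgS]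
    have : (0 : ℝ) ≤ ((π.symm j : ℕ) : ℝ) := Nat.cast_nonneg _
    nlinarith
  have hS_ub : ∀ j, g (σ j) ≤ A + c * ε + c * k := by
    intro j
    rw [hgS]
    have h1 : ((π.symm j : ℕ) : ℝ) + 1 ≤ (k : ℝ) := by
      exact_mod_cast Nat.succ_le_of_lt (π.symm j).isLt
    nlinarith
  -- classification of the values of g
  have hg_cases : ∀ s,
      (∃ j, σ j = s) ∨
      ((¬ ∃ j, σ j = s) ∧ s.card ≤ n ∧ A < f s ∧ f s < M ∧ g s = A + c * (f s - A)) ∨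
      ((¬ ∃ j, σ j = s) ∧ n + 2 ≤ s.card ∧ L < f s ∧ f s < B ∧ g s = B - c * (B - f s)) ∨
      ((¬ ∃ j, σ j = s) ∧ g s = f s ∧ ¬ (s.card ≤ n ∧ A < f s ∧ f s < M) ∧
        ¬ (n + 2 ≤ s.card ∧ L < f s ∧ f s < B)) := by
    intro s
    by_cases h1 : ∃ j, σ j = s
    · exact Or.inl h1
    by_cases h2 : s.card ≤ n ∧ A < f s ∧ f s < M
    · refine Or.inr (Or.inl ⟨h1, h2.1, h2.2.1, h2.2.2, ?_⟩)
      rw [hgdef]; simp only; rw [if_neg h1, if_pos h2]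
    by_cases h3 : n + 2 ≤ s.card ∧ L < f s ∧ f s < B
    · refine Or.inr (Or.inr (Or.inl ⟨h1, h3.1, h3.2.1, h3.2.2, ?_⟩))
      rw [hgdef]; simp only; rw [if_neg h1, if_neg h2, if_pos h3]
    · refine Or.inr (Or.inr (Or.inr ⟨h1, ?_, h2, h3⟩))
      rw [hgdef]; simp only; rw [if_neg h1, if_neg h2, if_neg h3]
  clear_value z L M A B c0 Bad pos g
  refine ⟨g, ⟨?_, ?_⟩, ?_, ?_⟩
  · -- monotonicity
    intro s hs t ht hst
    rcases eq_or_ne s t with rfl | hne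
    · exact le_refl _
    have hssub : s ⊂ t := Finset.ssubset_iff_subset_ne.mpr ⟨hst, hne⟩
    have hcard : s.card < t.card := Finset.card_lt_card hssub
    have hfst : f s < f t :=
      lt_of_le_of_ne (hmono_f s hs t ht hst) fun h => hne (hinj_f s hs t ht h)
    rcases hg_cases t with ⟨j, rfl⟩ |
        ⟨htn, htc, htA, htM, htg⟩ | ⟨htn, htc, htL, htB, htg⟩ | ⟨htn, htg, htP2, htP3⟩
    · -- t is one of the σ's
      have hsc : s.card ≤ n := by have := hdim j; omega
      have hftM : f (σ j) ≤ M := hleM j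
      rcases hg_cases s with ⟨j', rfl⟩ |
          ⟨hsn, hsc', hsA, hsM, hsg⟩ | ⟨hsn, hsc', hsL, hsB, hsg⟩ | ⟨hsn, hsg, hsP2, hsP3⟩
      · exfalso; have := hdim j'; omega
      · rw [hsg]
        have h1 : c * (f s - A) < c * ε := by nlinarith
        have := hS_lb j
        linarith
      · exfalso; omega
      · rw [hsg]
        have hfsA : f s ≤ A := by
          by_contra h
          push_neg at h
          exact hsP2 ⟨hsc, h, hfst.trans_le hftM⟩
        have := hS_lb j
        nlinarith
    · -- t in the down zone
      rcases hg_cases s with ⟨j', rfl⟩ |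
          ⟨hsn, hsc', hsA, hsM, hsg⟩ | ⟨hsn, hsc', hsL, hsB, hsg⟩ | ⟨hsn, hsg, hsP2, hsP3⟩
      · exfalso; have := hdim j'; omega
      · rw [hsg, htg]; nlinarith
      · exfalso; omega
      · rw [hsg, htg]
        have hfsA : f s ≤ A := by
          by_contra h
          push_neg at h
          exact hsP2 ⟨by omega, h, hfst.trans htM⟩
        nlinarith
    · -- t in the up zone
      have htlb : B - c * ε < g t := by rw [htg]; nlinarith
      rcases hg_cases s with ⟨j', rfl⟩ |
          ⟨hsn, hsc', hsA, hsM, hsg⟩ | ⟨hsn, hsc', hsL, hsB, hsg⟩ | ⟨hsn, hsg, hsP2, hsP3⟩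
      · have := hS_ub j'
        linarith
      · rw [hsg]
        have h1 : c * (f s - A) < c * ε := by nlinarith
        linarith
      · rw [hsg, htg]; nlinarith
      · rw [hsg, htg]
        nlinarith [mul_nonneg (sub_nonneg.mpr hc_lt1.le) (sub_nonneg.mpr htB.le)]
    · -- t keeps its value
      rw [htg]
      rcases hg_cases s with ⟨j', rfl⟩ |
          ⟨hsn, hsc', hsA, hsM, hsg⟩ | ⟨hsn, hsc', hsL, hsB, hsg⟩ | ⟨hsn, hsg, hsP2, hsP3⟩
      · have hftB : B ≤ f t := by
          by_contra h
          push_neg at h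
          have h2 : L < f t := (hLle j').trans_lt hfst
          have h3 : n + 2 ≤ t.card := by have := hdim j'; omega
          exact htP3 ⟨h3, h2, h⟩
        have := hS_ub j'
        linarith
      · rw [hsg]
        nlinarith [mul_nonneg (sub_nonneg.mpr hc_lt1.le) (sub_nonneg.mpr hsA.le)]
      · rw [hsg]
        have hftB : B ≤ f t := by
          by_contra h
          push_neg at h
          exact htP3 ⟨by omega, hsL.trans hfst, h⟩
        nlinarith
      · rw [hsg]; exact hfst.le
  · -- injectivity
    intro s hs t ht heq
    rcases hg_cases s with ⟨j, rfl⟩ |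
        ⟨hsn, hsc, hsA, hsM, hsg⟩ | ⟨hsn, hsc, hsL, hsB, hsg⟩ | ⟨hsn, hsg, hsP2, hsP3⟩ <;>
      rcases hg_cases t with ⟨j', rfl⟩ |
        ⟨htn, htc, htA, htM, htg⟩ | ⟨htn, htc, htL, htB, htg⟩ | ⟨htn, htg, htP2, htP3⟩
    · -- Σ Σ
      rw [hgS j, hgS j'] at heq
      have h1 : ((π.symm j : ℕ) : ℝ) = ((π.symm j' : ℕ) : ℝ) := by
        have := mul_left_cancel₀ hc_pos.ne'
          (by linarith : c * (((π.symm j : ℕ) : ℝ) + 1) = c * (((π.symm j' : ℕ) : ℝ) + 1))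
        linarith
      have h2 : π.symm j = π.symm j' := Fin.ext (by exact_mod_cast h1)
      rw [π.symm.injective h2]
    · -- Σ down
      exfalso
      have h1 : c * (f t - A) < c * ε := by nlinarith
      have := hS_lb j
      rw [hgS j] at heq
      rw [htg] at heq
      nlinarith
    · -- Σ up
      exfalso
      have := hS_ub j
      rw [htg] at heq
      nlinarith
    · -- Σ id
      exfalso
      rw [hgS j, htg] at heq
      have hden : (0 : ℝ) < ε + 1 + ((π.symm j : ℕ) : ℝ) := by
        have : (0 : ℝ) ≤ ((π.symm j : ℕ) : ℝ) := Nat.cast_nonneg _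
        linarith
      have hc_eq : c = (f t - A) / (ε + 1 + ((π.symm j : ℕ) : ℝ)) := by
        rw [eq_div_iff hden.ne']
        linarith [heq]
      apply hcBad
      rw [hBaddef]
      apply Finset.mem_coe.mpr
      apply Finset.mem_union.mpr
      refine Or.inr (Finset.mem_image.mpr ⟨(t, π.symm j), ?_, ?_⟩)
      · exact Finset.mem_product.mpr ⟨ht, Finset.mem_univ _⟩
      · exact hc_eq.symm
    · -- down Σ
      exfalso
      have h1 : c * (f s - A) < c * ε := by nlinarith
      have := hS_lb j'
      rw [hgS j'] at heq
      rw [hsg] at heq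
      nlinarith
    · -- down down
      rw [hsg, htg] at heq
      have : f s = f t := by
        have := mul_left_cancel₀ hc_pos.ne' (by linarith : c * (f s - A) = c * (f t - A))
        linarith
      exact hinj_f s hs t ht this
    · -- down up
      exfalso
      rw [hsg, htg] at heq
      have h1 : c * (f s - A) < c * ε := by nlinarith
      have h2 : c * (B - f t) < c * ε := by nlinarith
      nlinarith
    · -- down id
      exfalso
      rw [hsg, htg] at heq
      have hc_eq : c = (f t - A) / (f s - A) := by
        rw [eq_div_iff (by linarith : f s - A ≠ 0)]
        linarith
      apply hcBad
      rw [hBaddef]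
      apply Finset.mem_coe.mpr
      apply Finset.mem_union.mpr
      refine Or.inl (Finset.mem_union.mpr (Or.inl (Finset.mem_image.mpr ⟨(t, s), ?_, ?_⟩)))
      · exact Finset.mem_product.mpr ⟨ht, hs⟩
      · exact hc_eq.symm
    · -- up Σ
      exfalso
      rw [hgS j'] at heq
      rw [hsg] at heq
      have h1 : ((π.symm j' : ℕ) : ℝ) + 1 ≤ (k : ℝ) := by
        exact_mod_cast Nat.succ_le_of_lt (π.symm j').isLt
      have h2 : c * (B - f s) < c * ε := by nlinarith
      nlinarith
    · -- up down
      exfalso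
      rw [hsg, htg] at heq
      have h1 : c * (f t - A) < c * ε := by nlinarith
      have h2 : c * (B - f s) < c * ε := by nlinarith
      nlinarith
    · -- up up
      rw [hsg, htg] at heq
      have : f s = f t := by
        have := mul_left_cancel₀ hc_pos.ne'
          (by linarith : c * (B - f s) = c * (B - f t))
        linarith
      exact hinj_f s hs t ht this
    · -- up id
      exfalso
      rw [hsg, htg] at heq
      have hc_eq : c = (B - f t) / (B - f s) := by
        rw [eq_div_iff (by linarith : B - f s ≠ 0)]
        linarith
      apply hcBad
      rw [hBaddef]
      apply Finset.mem_coe.mpr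
      apply Finset.mem_union.mpr
      refine Or.inl (Finset.mem_union.mpr (Or.inr (Finset.mem_image.mpr ⟨(t, s), ?_, ?_⟩)))
      · exact Finset.mem_product.mpr ⟨ht, hs⟩
      · exact hc_eq.symm
    · -- id Σ
      exfalso
      rw [hgS j'] at heq
      rw [hsg] at heq
      have hden : (0 : ℝ) < ε + 1 + ((π.symm j' : ℕ) : ℝ) := by
        have : (0 : ℝ) ≤ ((π.symm j' : ℕ) : ℝ) := Nat.cast_nonneg _
        linarith
      have hc_eq : c = (f s - A) / (ε + 1 + ((π.symm j' : ℕ) : ℝ)) := by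
        rw [eq_div_iff hden.ne']
        linarith [heq]
      apply hcBad
      rw [hBaddef]
      apply Finset.mem_coe.mpr
      apply Finset.mem_union.mpr
      refine Or.inr (Finset.mem_image.mpr ⟨(s, π.symm j'), ?_, ?_⟩)
      · exact Finset.mem_product.mpr ⟨hs, Finset.mem_univ _⟩
      · exact hc_eq.symm
    · -- id down
      exfalso
      rw [hsg, htg] at heq
      have hc_eq : c = (f s - A) / (f t - A) := by
        rw [eq_div_iff (by linarith : f t - A ≠ 0)]
        linarith
      apply hcBad
      rw [hBaddef]
      apply Finset.mem_coe.mpr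
      apply Finset.mem_union.mpr
      refine Or.inl (Finset.mem_union.mpr (Or.inl (Finset.mem_image.mpr ⟨(s, t), ?_, ?_⟩)))
      · exact Finset.mem_product.mpr ⟨hs, ht⟩
      · exact hc_eq.symm
    · -- id up
      exfalso
      rw [hsg, htg] at heq
      have hc_eq : c = (B - f s) / (B - f t) := by
        rw [eq_div_iff (by linarith : B - f t ≠ 0)]
        linarith
      apply hcBad
      rw [hBaddef]
      apply Finset.mem_coe.mpr
      apply Finset.mem_union.mpr
      refine Or.inl (Finset.mem_union.mpr (Or.inr (Finset.mem_image.mpr ⟨(s, t), ?_, ?_⟩)))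
      · exact Finset.mem_product.mpr ⟨hs, ht⟩
      · exact hc_eq.symm
    · -- id id
      rw [hsg, htg] at heq
      exact hinj_f s hs t ht heq
  · -- distance bound
    intro s hs
    rcases hg_cases s with ⟨j, rfl⟩ |
        ⟨hsn, hsc, hsA, hsM, hsg⟩ | ⟨hsn, hsc, hsL, hsB, hsg⟩ | ⟨hsn, hsg, hsP2, hsP3⟩
    · have h1 := hS_lb j
      have h2 := hS_ub j
      have h3 := hleM j
      have h4 := hLle j
      rw [abs_le]
      constructor <;> nlinarith
    · rw [hsg, abs_le]
      constructor <;> nlinarith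
    · rw [hsg, abs_le]
      constructor <;> nlinarith
    · rw [hsg]
      simp [hε.le]
  · -- the ordering
    intro i j hij
    rw [hgS (π i), hgS (π j), Equiv.symm_apply_apply, Equiv.symm_apply_apply]
    have h1 : ((i : ℕ) : ℝ) < ((j : ℕ) : ℝ) := by exact_mod_cast hij
    nlinarith
end

section
/- Let K be a finite simplicial complex with an injective filtration function f, let [α] be an n-dimensional homology class born at a and terminating at b, and for 0 < ε < (b−a)/2 let Σ_ε be the set of terminal simplices of [α] over injective filtration functions within sup-distance ε of f. Then for every t ∈ (0, (b−a)/2) there exists δ > 0 such that Σ_ε = Σ_t for all ε ∈ (t − δ, t]; i.e., ε ↦ Σ_ε is constant on a half-open interval ending at each t. -/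
open scoped BigOperators

variable {V : Type*} [LinearOrder V]

variable (𝔽 : Type*) [Field 𝔽]

section Aux15

lemma sublevel_top_eq_aux15 {V : Type*} [LinearOrder V] (K : SComplex V)
    (g g' : Finset V → ℝ)
    (hg : IsFiltrationFn K g) (hg' : IsFiltrationFn K g')
    (hord : ∀ s ∈ K.faces, ∀ u ∈ K.faces, (g s < g u ↔ g' s < g' u))
    {Δ : Finset V} (hΔ : Δ ∈ K.faces) :
    sublevel K g (g Δ) = sublevel K g' (g' Δ) := by
  ext s
  simp only [sublevel, Finset.mem_filter]
  constructor
  · rintro ⟨hs, hle⟩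
    refine ⟨hs, ?_⟩
    rcases lt_or_eq_of_le hle with h | h
    · exact ((hord s hs Δ hΔ).mp h).le
    · rw [hg.2 s hs Δ hΔ h]
  · rintro ⟨hs, hle⟩
    refine ⟨hs, ?_⟩
    rcases lt_or_eq_of_le hle with h | h
    · exact ((hord s hs Δ hΔ).mpr h).le
    · rw [hg'.2 s hs Δ hΔ h]

lemma sublevel_lower_aux15 {V : Type*} [LinearOrder V] (K : SComplex V)
    (g g' : Finset V → ℝ)
    (hg : IsFiltrationFn K g) (hg' : IsFiltrationFn K g')
    (hord : ∀ s ∈ K.faces, ∀ u ∈ K.faces, (g s < g u ↔ g' s < g' u))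
    {Δ : Finset V} (hΔ : Δ ∈ K.faces) {q : ℝ} (hq : q < g' Δ) :
    ∃ q' < g Δ, sublevel K g q' = sublevel K g' q := by
  by_cases hS : (sublevel K g' q).Nonempty
  · obtain ⟨s₀, hs₀S, hmax⟩ := Finset.exists_max_image (sublevel K g' q) g hS
    obtain ⟨hs₀f, hs₀le⟩ := Finset.mem_filter.mp hs₀S
    refine ⟨g s₀, (hord s₀ hs₀f Δ hΔ).mpr (lt_of_le_of_lt hs₀le hq), ?_⟩
    ext s
    simp only [sublevel, Finset.mem_filter]
    constructor
    · rintro ⟨hs, hle⟩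
      refine ⟨hs, ?_⟩
      rcases lt_or_eq_of_le hle with h | h
      · exact le_trans ((hord s hs s₀ hs₀f).mp h).le hs₀le
      · rw [hg.2 s hs s₀ hs₀f h]; exact hs₀le
    · rintro ⟨hs, hle⟩
      have hm := hmax s (Finset.mem_filter.mpr ⟨hs, hle⟩)
      exact ⟨hs, hm⟩
  · refine ⟨(K.faces.inf' ⟨Δ, hΔ⟩ g) - 1, ?_, ?_⟩
    · have := Finset.inf'_le g hΔ; linarith
    · rw [Finset.not_nonempty_iff_eq_empty] at hS
      rw [hS, Finset.eq_empty_iff_forall_notMem]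
      intro s hs
      obtain ⟨hsf, hle⟩ := Finset.mem_filter.mp hs
      have := Finset.inf'_le g hsf
      linarith

lemma terminal_transfer_aux15 {V : Type*} [LinearOrder V] (𝔽 : Type*) [Field 𝔽]
    (K : SComplex V) (g g' : Finset V → ℝ)
    (hg : IsFiltrationFn K g) (hg' : IsFiltrationFn K g')
    (hord : ∀ s ∈ K.faces, ∀ u ∈ K.faces, (g s < g u ↔ g' s < g' u))
    (n : ℕ) (α : Finset V →₀ 𝔽) {Δ : Finset V}
    (h : TerminalSimplex 𝔽 K g n α Δ) : TerminalSimplex 𝔽 K g' n α Δ := by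
  obtain ⟨hΔ, ht1, ht2⟩ := h
  refine ⟨hΔ, ?_, ?_⟩
  · rw [TrivialIn, ← sublevel_top_eq_aux15 K g g' hg hg' hord hΔ]
    exact ht1
  · intro q hq
    obtain ⟨q', hq', heq⟩ := sublevel_lower_aux15 K g g' hg hg' hord hΔ hq
    rw [TrivialIn, ← heq]
    exact ht2 q' hq'

lemma perturb_aux15 {V : Type*} [LinearOrder V] (K : SComplex V)
    (f g : Finset V → ℝ) (hf : IsFiltrationFn K f)
    (hg : IsFiltrationFn K g) {t : ℝ} (ht : 0 < t) (hd : DistLE K f g t) :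
    ∃ (g' : Finset V → ℝ) (ε' : ℝ), IsFiltrationFn K g' ∧ DistLE K f g' ε' ∧
      0 ≤ ε' ∧ ε' < t ∧
      ∀ s ∈ K.faces, ∀ u ∈ K.faces, (g s < g u ↔ g' s < g' u) := by
  classical
  set P := (K.faces ×ˢ K.faces).filter (fun p => g p.1 < g p.2) with hP
  by_cases hPne : P.Nonempty
  · set m := P.inf' hPne (fun p => g p.2 - g p.1) with hm
    have hm0 : 0 < m := by
      rw [hm, Finset.lt_inf'_iff]
      intro p hp
      have := (Finset.mem_filter.mp hp).2
      linarith
    set l := m / (m + 2 * t + 1) with hl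
    have hden : (0:ℝ) < m + 2 * t + 1 := by linarith
    have hl0 : 0 < l := div_pos hm0 hden
    have hl1 : l < 1 := by rw [hl, div_lt_one hden]; linarith
    have hleq : l * (m + 2 * t + 1) = m := div_mul_cancel₀ m (ne_of_gt hden)
    set g' : Finset V → ℝ := fun s => (1 - l) * g s + l * f s with hg'def
    have hord : ∀ s ∈ K.faces, ∀ u ∈ K.faces, (g s < g u ↔ g' s < g' u) := by
      intro s hs u hu
      constructor
      · intro h
        have h1 := hd s hs
        have h2 := hd u hu
        rw [abs_le] at h1 h2
        have hmem : (s, u) ∈ P :=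
          Finset.mem_filter.mpr ⟨Finset.mem_product.mpr ⟨hs, hu⟩, h⟩
        have hmle : m ≤ g u - g s := by
          rw [hm]
          exact Finset.inf'_le (fun p => g p.2 - g p.1) hmem
        simp only [hg'def]
        nlinarith [hleq, hl0, hl1]
      · intro h
        by_contra hc
        rcases lt_or_eq_of_le (not_lt.mp hc) with h' | h'
        · have h1 := hd s hs
          have h2 := hd u hu
          rw [abs_le] at h1 h2
          have hmem : (u, s) ∈ P :=
            Finset.mem_filter.mpr ⟨Finset.mem_product.mpr ⟨hu, hs⟩, h'⟩
          have hmle : m ≤ g s - g u := by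
            rw [hm]
            exact Finset.inf'_le (fun p => g p.2 - g p.1) hmem
          simp only [hg'def] at h
          nlinarith [hleq, hl0, hl1]
        · have : u = s := hg.2 u hu s hs h'
          subst this
          exact lt_irrefl _ h
    refine ⟨g', (1 - l) * t, ⟨?_, ?_⟩, ?_, by nlinarith, by nlinarith, hord⟩
    · intro s hs u hu hsu
      have hle := hg.1 s hs u hu hsu
      rcases lt_or_eq_of_le hle with h | h
      · exact ((hord s hs u hu).mp h).le
      · rw [hg.2 s hs u hu h]
    · intro s hs u hu heq
      by_contra hne
      rcases lt_or_gt_of_ne (fun h : g s = g u => hne (hg.2 s hs u hu h)) with h | h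
      · exact absurd heq (ne_of_lt ((hord s hs u hu).mp h))
      · exact absurd heq.symm (ne_of_lt ((hord u hu s hs).mp h))
    · intro s hs
      have h1 := hd s hs
      have : f s - g' s = (1 - l) * (f s - g s) := by simp only [hg'def]; ring
      rw [this, abs_mul, abs_of_nonneg (by linarith : (0:ℝ) ≤ 1 - l)]
      exact mul_le_mul_of_nonneg_left h1 (by linarith)
  · refine ⟨f, 0, hf, ?_, le_refl 0, ht, ?_⟩
    · intro s hs; simp
    · intro s hs u hu
      have h1 : ¬ g s < g u := fun h =>
        hPne ⟨(s, u), Finset.mem_filter.mpr ⟨Finset.mem_product.mpr ⟨hs, hu⟩, h⟩⟩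
      have h2 : ¬ g u < g s := fun h =>
        hPne ⟨(u, s), Finset.mem_filter.mpr ⟨Finset.mem_product.mpr ⟨hu, hs⟩, h⟩⟩
      have : s = u := hg.2 s hs u hu (le_antisymm (not_lt.mp h2) (not_lt.mp h1))
      rw [this]
      simp

end Aux15

/-- Lemma `LemmaUSC` for `Σ_ε`: `ε ↦ Σ_ε` is constant on a
half-open interval `(t - δ, t]` at each `t ∈ (0, (b-a)/2)`. -/
theorem stmt15 {V : Type*} [LinearOrder V] (𝔽 : Type*) [Field 𝔽]
    (K : SComplex V) (f : Finset V → ℝ) (hf : IsFiltrationFn K f)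
    (n : ℕ) (α : Finset V →₀ 𝔽) (a b : ℝ)
    (hborn : BornAt 𝔽 K f n α a) (hterm : TerminatesAt 𝔽 K f n α b) :
    ∀ t : ℝ, 0 < t → t < (b - a) / 2 → ∃ δ > 0, ∀ ε : ℝ, 0 < ε → t - δ < ε → ε ≤ t →
      TermSet 𝔽 K f n α ε = TermSet 𝔽 K f n α t := by
  intro t ht _
  classical
  have key : ∀ Δ : Finset V, ∃ ε' : ℝ, 0 ≤ ε' ∧ ε' < t ∧
      (Δ ∈ TermSet 𝔽 K f n α t → ∀ ε : ℝ, ε' ≤ ε → Δ ∈ TermSet 𝔽 K f n α ε) := by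
    intro Δ
    by_cases hΔ : Δ ∈ TermSet 𝔽 K f n α t
    · obtain ⟨g, hgfil, hgd, htermg⟩ := hΔ
      obtain ⟨g', ε', hg'fil, hg'd, hε0, hεt, hord⟩ :=
        perturb_aux15 K f g hf hgfil ht hgd
      refine ⟨ε', hε0, hεt, fun _ ε hεε => ⟨g', hg'fil,
        fun s hs => (hg'd s hs).trans hεε, ?_⟩⟩
      exact terminal_transfer_aux15 𝔽 K g g' hgfil hg'fil hord n α htermg
    · exact ⟨t / 2, by linarith, by linarith, fun h => absurd h hΔ⟩
  choose e he0 he1 he2 using key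
  set c := (insert (t / 2) (K.faces.image e)).max' (Finset.insert_nonempty _ _) with hc
  have hct : c < t := by
    rw [hc, Finset.max'_lt_iff]
    intro b hb
    rcases Finset.mem_insert.mp hb with h | h
    · rw [h]; linarith
    · obtain ⟨Δ, _, rfl⟩ := Finset.mem_image.mp h
      exact he1 Δ
  refine ⟨t - c, by linarith, ?_⟩
  intro ε hε0 hεlo hεhi
  ext Δ
  constructor
  · rintro ⟨g, h1, h2, h3⟩
    exact ⟨g, h1, fun s hs => (h2 s hs).trans hεhi, h3⟩
  · intro hΔ
    have hΔf : Δ ∈ K.faces := by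
      obtain ⟨g, _, _, hterm'⟩ := hΔ
      exact hterm'.1
    have hec : e Δ ≤ c :=
      Finset.le_max' _ _ (Finset.mem_insert_of_mem (Finset.mem_image_of_mem e hΔf))
    exact he2 Δ hΔ ε (by linarith)
end
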